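/- Let V be a 2-dimensional vector space over a field k, and let v₁,v₂,v₃ in V and λ₁,λ₂,λ₃ in V* satisfy λᵢ(vᵢ)=0, all nonzero, with vᵢ pairwise non-colinear. Define c_{i,j} in L(V) by c_{i,j}(u) = λⱼ(u)·vᵢ. Then for all a₁, a₂ in L(V): a₁a₂ = tr(a₁)tr(a₂)·I + (λ₁(v₂)λ₂(v₃)λ₃(v₁))⁻¹ · Σ_{σ∈S₃} ε(σ) · tr(a₁ c_{σ(1),σ(2)}) · tr(a₂ c_{σ(2),σ(3)}) · c_{σ(3),σ(1)}. In particular this expresses the product of two 2×2 matrices as a sum of 7 terms, each a product of a scalar bilinear in (a₁,a₂) with a fixed matrix. -/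

import Mathlib

open Equiv Module

private lemma sum_perm_fin3' {M : Type*} [AddCommMonoid M] (f : Equiv.Perm (Fin 3) → M) :
    ∑ σ : Equiv.Perm (Fin 3), f σ =
      f 1 + f (swap 0 1) + f (swap 0 2) + f (swap 1 2)
      + f ⟨![1,2,0], ![2,0,1], by decide, by decide⟩
      + f ⟨![2,0,1], ![1,2,0], by decide, by decide⟩ := by
  rw [show (Finset.univ : Finset (Equiv.Perm (Fin 3))) =
    {1, swap 0 1, swap 0 2, swap 1 2,
     ⟨![1,2,0], ![2,0,1], by decide, by decide⟩,
     ⟨![2,0,1], ![1,2,0], by decide, by decide⟩} from by decide]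
  rw [Finset.sum_insert (by decide), Finset.sum_insert (by decide),
      Finset.sum_insert (by decide), Finset.sum_insert (by decide),
      Finset.sum_insert (by decide), Finset.sum_singleton]
  abel

set_option maxHeartbeats 1000000 in
/-- Rank-7 decomposition of matrix multiplication (Strassen form): with
`c_{i,j} = ι(vᵢ ⊗ λⱼ) : u ↦ λⱼ(u) • vᵢ`, for all `a₁, a₂ ∈ L(V)`:
`a₁a₂ = tr(a₁)tr(a₂) • I + (λ₁(v₂)λ₂(v₃)λ₃(v₁))⁻¹ •
 Σ_{σ∈S₃} ε(σ) tr(a₁ c_{σ(1),σ(2)}) tr(a₂ c_{σ(2),σ(3)}) • c_{σ(3),σ(1)}`. -/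
theorem stmt18 (k V : Type*) [Field k] [AddCommGroup V] [Module k V]
    [FiniteDimensional k V] (hdim : Module.finrank k V = 2)
    (v : Fin 3 → V) (lam : Fin 3 → Module.Dual k V)
    (hv : ∀ i, v i ≠ 0) (hlam : ∀ i, lam i ≠ 0)
    (hzero : ∀ i, lam i (v i) = 0)
    (hnc : ∀ i j, i ≠ j → v i ∉ Submodule.span k {v j})
    (c : Fin 3 → Fin 3 → Module.End k V)
    (hc : ∀ i j (u : V), c i j u = lam j u • v i)
    (a₁ a₂ : Module.End k V) :
    a₁ * a₂ =
      (LinearMap.trace k V a₁ * LinearMap.trace k V a₂) • (1 : Module.End k V)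
      + (lam 0 (v 1) * lam 1 (v 2) * lam 2 (v 0))⁻¹ •
        ∑ σ : Equiv.Perm (Fin 3),
          (((Equiv.Perm.sign σ : ℤ) : k) *
            LinearMap.trace k V (a₁ * c (σ 0) (σ 1)) *
            LinearMap.trace k V (a₂ * c (σ 1) (σ 2))) • c (σ 2) (σ 0) := by
  -- basis from v 0, v 1
  have hb01 : LinearIndependent k ![v 0, v 1] := by
    rw [linearIndependent_fin2]
    refine ⟨fun h => ?_, fun a h => ?_⟩
    · simp only [Matrix.cons_val_one, Matrix.head_cons, Matrix.cons_val_zero] at h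
      exact hnc 1 0 (by decide) (by rw [h]; exact Submodule.zero_mem _)
    · simp only [Matrix.cons_val_one, Matrix.head_cons, Matrix.cons_val_zero] at h
      exact hnc 0 1 (by decide) (Submodule.mem_span_singleton.2 ⟨a, h⟩)
  let b : Basis (Fin 2) k V := basisOfLinearIndependentOfCardEqFinrank hb01 (by simp [hdim])
  have hb0 : b 0 = v 0 := by simp [b, coe_basisOfLinearIndependentOfCardEqFinrank]
  have hb1 : b 1 = v 1 := by simp [b, coe_basisOfLinearIndependentOfCardEqFinrank]
  set α : k := b.repr (v 2) 0 with hαdef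
  set β : k := b.repr (v 2) 1 with hβdef
  have hv2 : v 2 = α • v 0 + β • v 1 := by
    have h := b.sum_repr (v 2)
    rw [Fin.sum_univ_two, hb0, hb1] at h
    exact h.symm
  have hα : α ≠ 0 := by
    intro h
    exact hnc 2 1 (by decide)
      (Submodule.mem_span_singleton.2 ⟨β, by rw [hv2, h, zero_smul, zero_add]⟩)
  have hβ : β ≠ 0 := by
    intro h
    exact hnc 2 0 (by decide)
      (Submodule.mem_span_singleton.2 ⟨α, by rw [hv2, h, zero_smul, add_zero]⟩)
  set p : k := lam 0 (v 1) with hpdef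
  set q : k := lam 1 (v 0) with hqdef
  set r : k := lam 2 (v 0) with hrdef
  set s : k := lam 2 (v 1) with hsdef
  have hp : p ≠ 0 := by
    intro h
    refine hlam 0 (b.ext fun i => ?_)
    fin_cases i <;> simp [hb0, hb1, hzero 0, ← hpdef, h]
  have hq : q ≠ 0 := by
    intro h
    refine hlam 1 (b.ext fun i => ?_)
    fin_cases i <;> simp [hb0, hb1, hzero 1, ← hqdef, h]
  have hrel : α * r + β * s = 0 := by
    have h := hzero 2
    rw [hv2, map_add, map_smul, map_smul, smul_eq_mul, smul_eq_mul] at h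
    exact h
  have hr : r ≠ 0 := by
    intro h
    have hs0 : s = 0 := by
      have : β * s = 0 := by rw [h, mul_zero, zero_add] at hrel; exact hrel
      exact (mul_eq_zero.1 this).resolve_left hβ
    refine hlam 2 (b.ext fun i => ?_)
    fin_cases i <;> simp [hb0, hb1, ← hrdef, ← hsdef, h, hs0]
  have hl02 : lam 0 (v 2) = β * p := by
    rw [hv2, map_add, map_smul, map_smul, hzero 0, smul_eq_mul, smul_eq_mul,
      mul_zero, zero_add, ← hpdef]
  have hl12 : lam 1 (v 2) = α * q := by
    rw [hv2, map_add, map_smul, map_smul, hzero 1, smul_eq_mul, smul_eq_mul,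
      mul_zero, add_zero, ← hqdef]
  -- pass to matrices
  apply (LinearMap.toMatrix b b).injective
  set A := LinearMap.toMatrix b b a₁ with hA
  set B := LinearMap.toMatrix b b a₂ with hB
  -- coordinate data
  set w : Fin 3 → Fin 2 → k := ![![1,0],![0,1],![α,β]] with hw
  set L : Fin 3 → Fin 2 → k := ![![0,p],![q,0],![r,s]] with hL
  have hLb : ∀ j m', lam j (b m') = L j m' := by
    intro j m'
    fin_cases j <;> fin_cases m' <;>
      simp [hb0, hb1, hL, hzero 0, hzero 1, ← hpdef, ← hqdef, ← hrdef, ← hsdef]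
  have hwb : ∀ i m, b.repr (v i) m = w i m := by
    intro i m
    fin_cases i <;> fin_cases m <;>
      simp [← hb0, ← hb1, hw, ← hαdef, ← hβdef]
  have hCm : ∀ i j, LinearMap.toMatrix b b (c i j) = Matrix.of fun m n => w i m * L j n := by
    intro i j
    ext m n
    rw [LinearMap.toMatrix_apply, hc, map_smul, Matrix.of_apply, ← hLb, ← hwb]
    rw [Finsupp.smul_apply, smul_eq_mul, mul_comm]
  have htr : ∀ (a : Module.End k V) i j,
      LinearMap.trace k V (a * c i j) =
        LinearMap.toMatrix b b a 0 0 * (w i 0 * L j 0)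
        + LinearMap.toMatrix b b a 0 1 * (w i 1 * L j 0)
        + LinearMap.toMatrix b b a 1 0 * (w i 0 * L j 1)
        + LinearMap.toMatrix b b a 1 1 * (w i 1 * L j 1) := by
    intro a i j
    rw [LinearMap.trace_eq_matrix_trace k b, LinearMap.toMatrix_mul, hCm]
    simp [Matrix.trace, Matrix.mul_apply, Fin.sum_univ_two, Matrix.diag]
    ring
  have htrA : LinearMap.trace k V a₁ = A 0 0 + A 1 1 := by
    rw [LinearMap.trace_eq_matrix_trace k b, Matrix.trace_fin_two, hA]
  have htrB : LinearMap.trace k V a₂ = B 0 0 + B 1 1 := by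
    rw [LinearMap.trace_eq_matrix_trace k b, Matrix.trace_fin_two, hB]
  rw [map_add, map_smul, map_smul, map_sum, LinearMap.toMatrix_mul, LinearMap.toMatrix_one,
    sum_perm_fin3']
  have hs : s = -(α * r) / β := by
    rw [eq_div_iff hβ]; linear_combination hrel
  have hD : p * (α * q) * r ≠ 0 :=
    mul_ne_zero (mul_ne_zero hp (mul_ne_zero hα hq)) hr
  simp only [map_smul, Equiv.Perm.one_apply,
    show (swap (0:Fin 3) 1) 0 = 1 from by decide,
    show (swap (0:Fin 3) 1) 1 = 0 from by decide,
    show (swap (0:Fin 3) 1) 2 = 2 from by decide,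
    show (swap (0:Fin 3) 2) 0 = 2 from by decide,
    show (swap (0:Fin 3) 2) 1 = 1 from by decide,
    show (swap (0:Fin 3) 2) 2 = 0 from by decide,
    show (swap (1:Fin 3) 2) 0 = 0 from by decide,
    show (swap (1:Fin 3) 2) 1 = 2 from by decide,
    show (swap (1:Fin 3) 2) 2 = 1 from by decide,
    show (⟨![1,2,0], ![2,0,1], by decide, by decide⟩ : Equiv.Perm (Fin 3)) 0 = 1 from by decide,
    show (⟨![1,2,0], ![2,0,1], by decide, by decide⟩ : Equiv.Perm (Fin 3)) 1 = 2 from by decide,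
    show (⟨![1,2,0], ![2,0,1], by decide, by decide⟩ : Equiv.Perm (Fin 3)) 2 = 0 from by decide,
    show (⟨![2,0,1], ![1,2,0], by decide, by decide⟩ : Equiv.Perm (Fin 3)) 0 = 2 from by decide,
    show (⟨![2,0,1], ![1,2,0], by decide, by decide⟩ : Equiv.Perm (Fin 3)) 1 = 0 from by decide,
    show (⟨![2,0,1], ![1,2,0], by decide, by decide⟩ : Equiv.Perm (Fin 3)) 2 = 1 from by decide,
    Equiv.Perm.sign_one,
    show (Equiv.Perm.sign (swap (0:Fin 3) 1) : ℤ) = -1 from by decide,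
    show (Equiv.Perm.sign (swap (0:Fin 3) 2) : ℤ) = -1 from by decide,
    show (Equiv.Perm.sign (swap (1:Fin 3) 2) : ℤ) = -1 from by decide,
    show (Equiv.Perm.sign (⟨![1,2,0], ![2,0,1], by decide, by decide⟩ : Equiv.Perm (Fin 3)) : ℤ)
      = 1 from by decide,
    show (Equiv.Perm.sign (⟨![2,0,1], ![1,2,0], by decide, by decide⟩ : Equiv.Perm (Fin 3)) : ℤ)
      = 1 from by decide,
    Units.val_one, Int.cast_one, Int.cast_neg]
  simp only [hCm, htr, htrA, htrB, ← hA, ← hB, hl02, hl12]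
  simp only [hw, hL, Matrix.cons_val_zero, Matrix.cons_val_one, Matrix.cons_val_two,
    Matrix.head_cons, Matrix.tail_cons, Matrix.head_fin_const, hs]
  rw [← sub_eq_iff_eq_add', eq_comm, inv_smul_eq_iff₀ hD, eq_comm]
  ext i j
  fin_cases i <;> fin_cases j <;>
  · simp only [Matrix.add_apply, Matrix.sub_apply, Matrix.smul_apply, Matrix.mul_apply,
      Matrix.one_apply, Matrix.of_apply, Fin.sum_univ_two, smul_eq_mul]
    norm_num
    field_simp
    ring
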